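/- Let k be a positive integer and let P(z) = ((z+1)(z+2)...(z+k) - k!)/z, regarded as a polynomial (the numerator is divisible by z). If z0 is a complex root of P, then |z0 + 1| <= k and |z0 + k| < k. -/

import Mathlib

open Polynomial Finset

lemma my_derivative_prod {ι : Type*} [DecidableEq ι] (s : Finset ι) (f : ι → Polynomial ℂ) :
    derivative (∏ i ∈ s, f i) = ∑ i ∈ s, (∏ j ∈ s.erase i, f j) * derivative (f i) := by
  induction s using Finset.induction with
  | empty => simp
  | insert _ _ ha ih =>
    rename_i a s
    rw [Finset.prod_insert ha, derivative_mul, ih, Finset.sum_insert ha,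
      Finset.erase_insert ha, Finset.mul_sum]
    rw [mul_comm (derivative (f a))]
    congr 1
    apply Finset.sum_congr rfl
    intro i hi
    rw [Finset.erase_insert_of_ne (by rintro rfl; exact ha hi),
      Finset.prod_insert (fun h => ha (Finset.mem_of_mem_erase h)), mul_assoc]

lemma prod_Icc_sub_eq_factorial (k : ℕ) : ∏ j ∈ Finset.Icc 1 k, (k + 1 - j) = k.factorial := by
  have h := Finset.prod_nbij (i := fun j => k + 1 - j) (f := fun j => k + 1 - j)
    (g := fun j => j) (s := Finset.Icc 1 k) (t := Finset.Icc 1 k)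
    (by intro a ha; simp only [Finset.mem_Icc] at *; omega)
    (by intro a ha b hb hab; simp only [Finset.mem_coe, Finset.mem_Icc] at *; omega)
    (by intro b hb; simp only [Finset.coe_Icc, Set.mem_Icc, Set.mem_image] at *
        exact ⟨k + 1 - b, by omega, by omega⟩)
    (fun _ _ => rfl)
  rw [h]
  have : Finset.Icc 1 k = Finset.Ico 1 (k + 1) := by
    ext x; simp [Nat.lt_succ_iff]
  rw [this, Finset.prod_Ico_id_eq_factorial]

theorem stmt_2 (k : ℕ) (hk : 0 < k) (P : Polynomial ℂ)
    (hP : ∀ z : ℂ, z * P.eval z =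
      ∏ j ∈ Finset.Icc 1 k, (z + (j : ℂ)) - (Nat.factorial k : ℂ))
    (z0 : ℂ) (hz0 : P.eval z0 = 0) :
    ‖z0 + 1‖ ≤ k ∧ ‖z0 + k‖ < k := by
  classical
  -- polynomial identity
  have hpoly : X * P = (∏ j ∈ Finset.Icc 1 k, (X + C (j : ℂ))) - C (k.factorial : ℂ) := by
    apply Polynomial.funext
    intro z
    simpa [Polynomial.eval_prod] using hP z
  -- z0 ≠ 0
  have hz0ne : z0 ≠ 0 := by
    rintro rfl
    have hd := congrArg derivative hpoly
    rw [derivative_mul, derivative_X, derivative_sub, derivative_C, sub_zero, one_mul,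
      my_derivative_prod] at hd
    have he := congrArg (Polynomial.eval (0 : ℂ)) hd
    simp only [eval_add, eval_mul, eval_X, zero_mul, add_zero, hz0, eval_finset_sum,
      derivative_add, derivative_X, derivative_C, eval_one, mul_one,
      eval_prod, eval_C, zero_add] at he
    push_cast at he
    have hpos : 0 < ∑ i ∈ Finset.Icc 1 k, ∏ j ∈ (Finset.Icc 1 k).erase i, j := by
      apply Finset.sum_pos
      · intro i hi
        apply Finset.prod_pos
        intro j hj
        have := Finset.mem_of_mem_erase hj
        simp only [Finset.mem_Icc] at this
        omega
      · exact ⟨k, Finset.mem_Icc.2 ⟨hk, le_rfl⟩⟩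
    have hc : ((∑ i ∈ Finset.Icc 1 k, ∏ j ∈ (Finset.Icc 1 k).erase i, j : ℕ) : ℂ) = 0 := by
      push_cast
      exact he.symm
    exact (Nat.cast_ne_zero.2 hpos.ne') hc
  -- product identity
  have hprod : ∏ j ∈ Finset.Icc 1 k, (z0 + (j : ℂ)) = (k.factorial : ℂ) := by
    have := hP z0
    rw [hz0, mul_zero] at this
    linear_combination -this
  have habs : ∏ j ∈ Finset.Icc 1 k, ‖z0 + (j : ℂ)‖ = (k.factorial : ℝ) := by
    rw [← norm_prod, hprod, Complex.norm_natCast]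
  have hne : (Finset.Icc 1 k).Nonempty := ⟨1, Finset.mem_Icc.2 ⟨le_rfl, hk⟩⟩
  constructor
  · -- |z0 + 1| ≤ k
    by_contra h
    push_neg at h
    have hlt : ∀ j ∈ Finset.Icc 1 k, ((k + 1 - j : ℕ) : ℝ) < ‖z0 + (j : ℂ)‖ := by
      intro j hj
      simp only [Finset.mem_Icc] at hj
      have h3 : ‖z0 + 1‖ ≤ ‖z0 + (j : ℂ)‖ + ((j - 1 : ℕ) : ℝ) := by
        have h2 : z0 + 1 = (z0 + (j : ℂ)) + (-(((j - 1 : ℕ) : ℂ))) := by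
          push_cast [Nat.cast_sub hj.1]
          ring
        rw [h2]
        calc ‖(z0 + (j : ℂ)) + (-(((j - 1 : ℕ) : ℂ)))‖ ≤
            ‖z0 + (j : ℂ)‖ + ‖-(((j - 1 : ℕ) : ℂ))‖ :=
              norm_add_le _ _
          _ = ‖z0 + (j : ℂ)‖ + ((j - 1 : ℕ) : ℝ) := by
              rw [norm_neg, Complex.norm_natCast]
      have hc : ((k + 1 - j : ℕ) : ℝ) = (k : ℝ) - ((j - 1 : ℕ) : ℝ) := by
        push_cast [Nat.cast_sub hj.1, Nat.cast_sub (by omega : j ≤ k + 1)]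
        ring
      rw [hc]
      linarith
    have hstrict : ∏ j ∈ Finset.Icc 1 k, ((k + 1 - j : ℕ) : ℝ) <
        ∏ j ∈ Finset.Icc 1 k, ‖z0 + (j : ℂ)‖ := by
      apply Finset.prod_lt_prod_of_nonempty _ hlt hne
      intro i hi
      simp only [Finset.mem_Icc] at hi
      have : 0 < k + 1 - i := by omega
      exact_mod_cast this
    rw [habs, ← Nat.cast_prod, prod_Icc_sub_eq_factorial] at hstrict
    exact lt_irrefl _ hstrict
  · -- |z0 + k| < k
    by_contra h
    push_neg at h
    set x := z0.re with hx
    set r := ‖z0‖ ^ 2 with hr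
    have hrpos : 0 < r := pow_pos (norm_pos_iff.mpr hz0ne) 2
    have hsq : ∀ j : ℕ, ‖z0 + (j : ℂ)‖ ^ 2 = (j : ℝ)^2 + 2*j*x + r := by
      intro j
      rw [Complex.sq_norm, Complex.normSq_apply, hr, Complex.sq_norm, Complex.normSq_apply]
      simp [Complex.add_re, Complex.add_im]
      ring
    have hk2 : (0 : ℝ) ≤ 2*k*x + r := by
      have h1 : (k : ℝ)^2 ≤ ‖z0 + (k : ℂ)‖ ^ 2 := by
        apply pow_le_pow_left₀ (by positivity) h
      rw [hsq k] at h1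
      linarith
    -- case k = 1
    rcases eq_or_lt_of_le (Nat.one_le_iff_ne_zero.2 hk.ne') with h1 | h1
    · -- k = 1
      have hk1 : k = 1 := h1.symm
      subst hk1
      simp [Finset.Icc_self, Nat.factorial] at hprod
      exact hz0ne hprod
    · -- k ≥ 2
      have hle : ∀ j ∈ Finset.Icc 1 k, ((j : ℝ))^2 ≤ ‖z0 + (j : ℂ)‖ ^ 2 := by
        intro j hj
        simp only [Finset.mem_Icc] at hj
        rw [hsq]
        have hkj : (j : ℝ) ≤ k := by exact_mod_cast hj.2
        have hj1 : (1 : ℝ) ≤ j := by exact_mod_cast hj.1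
        have hkp : (0 : ℝ) < k := by exact_mod_cast hk
        nlinarith [mul_nonneg (sub_nonneg.2 hkj) hrpos.le]
      have hlt1 : ((1 : ℕ) : ℝ)^2 < ‖z0 + ((1 : ℕ) : ℂ)‖ ^ 2 := by
        rw [hsq]
        have hkp : (1 : ℝ) < k := by exact_mod_cast h1
        push_cast
        nlinarith [mul_pos (sub_pos.2 hkp) hrpos, hk2]
      have hstrict : ∏ j ∈ Finset.Icc 1 k, ((j : ℝ))^2 <
          ∏ j ∈ Finset.Icc 1 k, ‖z0 + (j : ℂ)‖ ^ 2 := by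
        apply Finset.prod_lt_prod
        · intro i hi
          simp only [Finset.mem_Icc] at hi
          have : (0:ℝ) < i := by exact_mod_cast hi.1
          positivity
        · exact hle
        · exact ⟨1, Finset.mem_Icc.2 ⟨le_rfl, hk⟩, hlt1⟩
      have hidp : ∏ j ∈ Finset.Icc 1 k, ((j:ℝ)) = (k.factorial : ℝ) := by
        rw [← Nat.cast_prod]
        congr 1
        have : Finset.Icc 1 k = Finset.Ico 1 (k + 1) := by
          ext y; simp [Nat.lt_succ_iff]
        rw [this, Finset.prod_Ico_id_eq_factorial]
      rw [Finset.prod_pow, Finset.prod_pow, habs, hidp] at hstrict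
      exact lt_irrefl _ hstrict
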